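/- Let K = ⋃_n A_n be a Fraïssé structure in a relational language L with an exhaustion by finite substructures, and suppose each A_n has finite big Ramsey degree R_n. Assume that for each n < ω there is an unavoidable R_n-coloring γ_n of Emb(A_n,K) such that γ_m ≪ γ_n whenever m ≤ n < ω. Then K admits a big Ramsey structure: there exist a relational language L' containing L and an L'-structure K' with the same underlying set as K whose L-reduct is K, such that every finite substructure A of K has a finite big Ramsey degree R_A, the equivalence relation ≈_A on Emb(A,K) has exactly R_A equivalence classes, and every ≈_A-class is an unavoidable subset of Emb(A,K). -/

import Mathlib

open FirstOrder Language Set Function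

/-- A subset `S ⊆ Emb(A,K)` is *large* if `η⁻¹(S) = Emb(A,K)` for some self-embedding `η` of `K`. -/
def EmbLarge {L : Language} {K : Type*} {A : Type*} [L.Structure K] [L.Structure A]
    (S : Set (A ↪[L] K)) : Prop :=
  ∃ η : K ↪[L] K, ∀ f : A ↪[L] K, η.comp f ∈ S

/-- A subset `S ⊆ Emb(A,K)` is *unavoidable* if `η⁻¹(S) ≠ ∅` for every self-embedding `η` of `K`. -/
def EmbUnavoidable {L : Language} {K : Type*} {A : Type*} [L.Structure K] [L.Structure A]
    (S : Set (A ↪[L] K)) : Prop :=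
  ∀ η : K ↪[L] K, ∃ f : A ↪[L] K, η.comp f ∈ S

/-- A subset `S ⊆ Emb(A,K)` is *somewhere unavoidable* if `η⁻¹(S)` is unavoidable for some
self-embedding `η` of `K`. -/
def EmbSomewhereUnavoidable {L : Language} {K : Type*} {A : Type*} [L.Structure K]
    [L.Structure A] (S : Set (A ↪[L] K)) : Prop :=
  ∃ η : K ↪[L] K, EmbUnavoidable {f : A ↪[L] K | η.comp f ∈ S}

/-- A subset `S ⊆ Emb(A,K)` is *scattered* if it is not somewhere unavoidable. -/
def EmbScattered {L : Language} {K : Type*} {A : Type*} [L.Structure K] [L.Structure A]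
    (S : Set (A ↪[L] K)) : Prop :=
  ¬ EmbSomewhereUnavoidable S

/-- A coloring of `Emb(A,K)` is *unavoidable* if each of its fibers is empty or unavoidable. -/
def UnavoidableColoring {L : Language} {K : Type*} {A : Type*} [L.Structure K]
    [L.Structure A] {C : Type*} (γ : (A ↪[L] K) → C) : Prop :=
  ∀ c : C, γ ⁻¹' {c} = ∅ ∨ EmbUnavoidable (γ ⁻¹' {c})

/-- `A` has big Ramsey degree `ℓ` (in `K`) if `ℓ` is least such that for every `r` and every
coloring `γ : Emb(A,K) → Fin r` there is a self-embedding `η` of `K` with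
`|{γ(η∘f) : f ∈ Emb(A,K)}| ≤ ℓ`. -/
def HasBigRamseyDegree {L : Language} (A : Type*) [L.Structure A] (K : Type*)
    [L.Structure K] (ℓ : ℕ) : Prop :=
  IsLeast {l : ℕ | ∀ (r : ℕ) (γ : (A ↪[L] K) → Fin r),
    ∃ η : K ↪[L] K, (Set.range fun f : A ↪[L] K => γ (η.comp f)).ncard ≤ l} ℓ

/-- Given an `L'`-structure `S'` on `K`, two embeddings `h, h' ∈ Emb(A,K)` are equivalent
(`h ≈_A h'`) if they pull back the `L'`-relations on `K` the same way: for every relation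
symbol `R` of `L'` and tuple `a` from `A`, `R(h(a))` holds iff `R(h'(a))` holds. -/
def StructEquiv {L : Language} {K : Type*} [L.Structure K]
    (L' : Language) (S' : L'.Structure K) {A : L.Substructure K}
    (h h' : ↥A ↪[L] K) : Prop :=
  ∀ (k : ℕ) (R : L'.Relations k) (a : Fin k → ↥A),
    (S'.RelMap R (fun i => h (a i)) ↔ S'.RelMap R (fun i => h' (a i)))

/-- An `L'`-structure `S'` on `K` is a *big Ramsey structure* for `K` if every finite
substructure `A` of `K` has a finite big Ramsey degree `R_A`, the equivalence relation `≈_A`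
has exactly `R_A` classes, and each `≈_A`-class is an unavoidable subset of `Emb(A,K)`. -/
def IsBigRamseyStructure {L : Language} {K : Type*} [L.Structure K]
    (L' : Language) (S' : L'.Structure K) : Prop :=
  ∀ A : L.Substructure K, (A : Set K).Finite →
    ∃ RA : ℕ, HasBigRamseyDegree (L := L) ↥A K RA ∧
      Finite (Quot (StructEquiv L' S' (A := A))) ∧
      Nat.card (Quot (StructEquiv L' S' (A := A))) = RA ∧
      ∀ h : ↥A ↪[L] K, EmbUnavoidable {h' : ↥A ↪[L] K | StructEquiv L' S' h h'}

universe x y w z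

set_option linter.unusedSectionVars false
set_option maxHeartbeats 1000000

namespace ZBRS

variable {L : FirstOrder.Language.{x, y}} {K : Type w} [iK : L.Structure K]

def PatEq {k : ℕ} (x y : Fin k → K) : Prop :=
  (∀ i j, x i = x j ↔ y i = y j) ∧
    ∀ (l : ℕ) (r : L.Relations l) (σ : Fin l → Fin k),
      Structure.RelMap r (x ∘ σ) ↔ Structure.RelMap r (y ∘ σ)

namespace PatEq

protected lemma refl {k : ℕ} (x : Fin k → K) : PatEq (L := L) x x :=
  ⟨fun _ _ => Iff.rfl, fun _ _ _ => Iff.rfl⟩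

protected lemma symm {k : ℕ} {x y : Fin k → K} (h : PatEq (L := L) x y) :
    PatEq (L := L) y x :=
  ⟨fun i j => (h.1 i j).symm, fun l r σ => (h.2 l r σ).symm⟩

protected lemma trans {k : ℕ} {x y z : Fin k → K} (h : PatEq (L := L) x y)
    (h' : PatEq (L := L) y z) : PatEq (L := L) x z :=
  ⟨fun i j => (h.1 i j).trans (h'.1 i j), fun l r σ => (h.2 l r σ).trans (h'.2 l r σ)⟩

protected lemma comp {k k' : ℕ} {x y : Fin k → K} (h : PatEq (L := L) x y)
    (e : Fin k' → Fin k) : PatEq (L := L) (x ∘ e) (y ∘ e) :=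
  ⟨fun i j => h.1 (e i) (e j), fun l r σ => h.2 l r (e ∘ σ)⟩

end PatEq

lemma patEq_emb {X : Type z} [L.Structure X] (h h' : X ↪[L] K) {k : ℕ} (a : Fin k → X) :
    PatEq (L := L) (fun i => h (a i)) (fun i => h' (a i)) := by
  constructor
  · intro i j
    rw [h.injective.eq_iff, h'.injective.eq_iff]
  · intro l r σ
    exact (h.map_rel r (a ∘ σ)).trans (h'.map_rel r (a ∘ σ)).symm

section Ctx

variable (A : ℕ → L.Substructure K) {C : ℕ → Type z} (γ : ∀ n, (↥(A n) ↪[L] K) → C n)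

lemma capture (hmono : Monotone A) (hcover : ∀ a : K, ∃ n, a ∈ A n)
    {s : Set K} (hs : s.Finite) (m : ℕ) : ∃ M, m ≤ M ∧ s ⊆ (A M : Set K) := by
  refine Set.Finite.induction_on (motive := fun s _ => ∃ M, m ≤ M ∧ s ⊆ (A M : Set K)) s hs
    ⟨m, le_rfl, by simp⟩ ?_
  rintro a s - - ⟨M₁, hmM₁, hM₁⟩
  obtain ⟨n, hn⟩ := hcover a
  refine ⟨max M₁ n, le_trans hmM₁ (le_max_left _ _), ?_⟩
  rw [Set.insert_subset_iff]
  exact ⟨hmono (le_max_right M₁ n) hn,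
    hM₁.trans (SetLike.coe_subset_coe.2 (hmono (le_max_left M₁ n)))⟩

/-- The set of levels at which the pattern of `x` appears. -/
def lvl {k : ℕ} (x : Fin k → K) : Set ℕ :=
  {n | ∃ u : Fin k → ↥(A n), PatEq (L := L) x fun i => (u i : K)}

noncomputable def n0 {k : ℕ} (x : Fin k → K) : ℕ := sInf (lvl A x)

lemma lvl_nonempty (hmono : Monotone A) (hcover : ∀ a : K, ∃ n, a ∈ A n)
    {k : ℕ} (x : Fin k → K) : (lvl A x).Nonempty := by
  obtain ⟨M, -, hM⟩ := capture A hmono hcover (Set.finite_range x) 0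
  exact ⟨M, fun i => ⟨x i, hM ⟨i, rfl⟩⟩, PatEq.refl x⟩

lemma n0_mem (hmono : Monotone A) (hcover : ∀ a : K, ∃ n, a ∈ A n)
    {k : ℕ} (x : Fin k → K) : n0 A x ∈ lvl A x :=
  Nat.sInf_mem (lvl_nonempty A hmono hcover x)

lemma lvl_congr {k : ℕ} {x y : Fin k → K} (h : PatEq (L := L) x y) :
    lvl A x = lvl A y := by
  ext n
  exact ⟨fun ⟨u, hu⟩ => ⟨u, h.symm.trans hu⟩, fun ⟨u, hu⟩ => ⟨u, h.trans hu⟩⟩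

lemma n0_congr {k : ℕ} {x y : Fin k → K} (h : PatEq (L := L) x y) :
    n0 A x = n0 A y := by
  unfold n0; rw [lvl_congr A h]

/-- The realization set: pairs (color, position) realized over the tuple `x` at level `n`. -/
def RealAt (n : ℕ) {k : ℕ} (x : Fin k → K) : Set (C n × (Fin k → ↥(A n))) :=
  {p | ∃ g : ↥(A n) ↪[L] K, γ n g = p.1 ∧ ∀ i, g (p.2 i) = x i}

def Linked (n k : ℕ) (p q : C n × (Fin k → ↥(A n))) : Prop :=
  ∃ x : Fin k → K, p ∈ RealAt A γ n x ∧ q ∈ RealAt A γ n x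

def EQV {k : ℕ} (x y : Fin k → K) : Prop :=
  PatEq (L := L) x y ∧
    ∃ p q, p ∈ RealAt A γ (n0 A x) x ∧ q ∈ RealAt A γ (n0 A x) y ∧
      Relation.EqvGen (Linked A γ (n0 A x) k) p q

lemma eqv_intro {k : ℕ} {x y : Fin k → K} (hpat : PatEq (L := L) x y) {n : ℕ}
    (hn : n0 A x = n) {p q : C n × (Fin k → ↥(A n))} (hp : p ∈ RealAt A γ n x)
    (hq : q ∈ RealAt A γ n y) (hch : Relation.EqvGen (Linked A γ n k) p q) :
    EQV A γ x y := by
  subst hn; exact ⟨hpat, p, q, hp, hq, hch⟩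

lemma eqv_elim {k : ℕ} {x y : Fin k → K} (h : EQV A γ x y) {n : ℕ} (hn : n0 A x = n) :
    PatEq (L := L) x y ∧ ∃ p q, p ∈ RealAt A γ n x ∧ q ∈ RealAt A γ n y ∧
      Relation.EqvGen (Linked A γ n k) p q := by
  subst hn; exact h

end Ctx

section Generic

variable {X : Type z} [L.Structure X]

/-- Preimages of unavoidable sets are unavoidable. -/
lemma unavoidable_precomp {S : Set (X ↪[L] K)} (hS : EmbUnavoidable S) (ζ : K ↪[L] K) :
    EmbUnavoidable {f : X ↪[L] K | ζ.comp f ∈ S} := by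
  intro η
  obtain ⟨f, hf⟩ := hS (ζ.comp η)
  exact ⟨f, by rwa [Set.mem_setOf_eq, ← Embedding.comp_assoc]⟩

/-- Purification: every coloring with finitely many achieved values can be composed with a
self-embedding so that all fibers become empty or unavoidable. -/
lemma purify {T : Type*} (F : (X ↪[L] K) → T) (hfin : {t | ∃ f, F f = t}.Finite) :
    ∃ ζ : K ↪[L] K, ∀ t : T,
      {f : X ↪[L] K | F (ζ.comp f) = t} = ∅ ∨ EmbUnavoidable {f | F (ζ.comp f) = t} := by
  classical
  obtain ⟨N, hN⟩ : ∃ N, {t | ∃ f, F f = t}.ncard ≤ N := ⟨_, le_rfl⟩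
  induction N generalizing F with
  | zero =>
    refine ⟨Embedding.refl L K, fun t => Or.inl ?_⟩
    have hemp : {t | ∃ f, F f = t} = ∅ := by
      rwa [← Set.ncard_eq_zero hfin, ← Nat.le_zero]
    ext f
    simp only [Set.mem_setOf_eq, Set.mem_empty_iff_false, iff_false]
    intro hf
    have ht : t ∈ {t | ∃ f, F f = t} := ⟨_, hf⟩
    rw [hemp] at ht
    exact ht
  | succ N ih =>
    by_cases hall : ∀ t : T, {f : X ↪[L] K | F f = t} = ∅ ∨ EmbUnavoidable {f | F f = t}
    · refine ⟨Embedding.refl L K, fun t => ?_⟩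
      rcases hall t with h | h
      · left; simpa [Embedding.refl_comp] using h
      · right; intro η; obtain ⟨f, hf⟩ := h η
        exact ⟨f, by simpa [Embedding.refl_comp] using hf⟩
    · push_neg at hall
      obtain ⟨t₀, ht₀ne, ht₀⟩ := hall
      rw [EmbUnavoidable] at ht₀
      push_neg at ht₀
      obtain ⟨η₀, hη₀⟩ := ht₀
      set F' : (X ↪[L] K) → T := fun f => F (η₀.comp f) with hF'
      obtain ⟨f₀, hf₀⟩ := ht₀ne
      have ht₀mem : t₀ ∈ {t | ∃ f, F f = t} := ⟨f₀, hf₀⟩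
      have hsub : {t | ∃ f, F' f = t} ⊆ {t | ∃ f, F f = t} \ {t₀} := by
        rintro t ⟨f, hf⟩
        refine ⟨⟨η₀.comp f, hf⟩, ?_⟩
        simp only [Set.mem_singleton_iff]
        rintro rfl
        exact hη₀ f hf
      have hfin' : {t | ∃ f, F' f = t}.Finite := hfin.diff.subset hsub
      have hcard : {t | ∃ f, F' f = t}.ncard ≤ N := by
        have h1 : ({t | ∃ f, F f = t} \ {t₀}).ncard < {t | ∃ f, F f = t}.ncard :=
          Set.ncard_diff_singleton_lt_of_mem ht₀mem hfin
        have h2 : {t | ∃ f, F' f = t}.ncard ≤ ({t | ∃ f, F f = t} \ {t₀}).ncard :=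
          Set.ncard_le_ncard hsub hfin.diff
        omega
      obtain ⟨ζ', hζ'⟩ := ih F' hfin' hcard
      refine ⟨η₀.comp ζ', fun t => ?_⟩
      have hrw : ∀ f : X ↪[L] K, F ((η₀.comp ζ').comp f) = F' (ζ'.comp f) := fun f => by
        rw [hF']; rw [Embedding.comp_assoc]
      rcases hζ' t with h | h
      · left
        ext f
        simp only [Set.mem_setOf_eq, Set.mem_empty_iff_false, iff_false, hrw f]
        intro hf
        have : f ∈ {f | F' (ζ'.comp f) = t} := hf
        rw [h] at this
        exact this
      · right
        intro η
        obtain ⟨f, hf⟩ := h η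
        refine ⟨f, ?_⟩
        have : F' (ζ'.comp (η.comp f)) = t := hf
        simp only [Set.mem_setOf_eq, hrw]
        rwa [← Embedding.comp_assoc] at this ⊢

/-- Extract an injective family from a set of size at least m. -/
lemma exists_inj_mem {T : Type*} {s : Set T} {m : ℕ} (h : m ≤ s.ncard ∨ s.Infinite) :
    ∃ ts : Fin m → T, Function.Injective ts ∧ ∀ i, ts i ∈ s := by
  rcases Nat.eq_zero_or_pos m with rfl | hm
  · exact ⟨Fin.elim0, fun i => i.elim0, fun i => i.elim0⟩
  have hex : ∃ t ⊆ s, t.Finite ∧ t.ncard = m := by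
    rcases h with h | h
    · obtain ⟨t, hts, htm⟩ := Set.exists_subset_card_eq h
      refine ⟨t, hts, ?_, htm⟩
      rcases Set.finite_or_infinite t with ht | ht
      · exact ht
      · exact absurd htm (by rw [ht.ncard]; omega)
    · obtain ⟨t, hts, htfin, htm⟩ := h.exists_subset_ncard_eq m
      exact ⟨t, hts, htfin, htm⟩
  obtain ⟨t, hts, htfin, htm⟩ := hex
  haveI := htfin.to_subtype
  have hcard : Nat.card t = m := by rw [Nat.card_coe_set_eq, htm]
  let e : t ≃ Fin m := (Finite.equivFin t).trans (finCongr hcard)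
  exact ⟨fun i => (e.symm i : T), fun i j hij => by
    have := Subtype.coe_injective hij
    simpa using congrArg e this, fun i => hts (e.symm i).2⟩

/-- Minimality: an everywhere-empty-or-unavoidable coloring achieves at most `Rn` values,
when `Rn` is a big Ramsey degree (membership part suffices). -/
lemma achieved_le {Rn : ℕ}
    (hmem : Rn ∈ {l : ℕ | ∀ (r : ℕ) (δ : (X ↪[L] K) → Fin r),
      ∃ η : K ↪[L] K, (Set.range fun f : X ↪[L] K => δ (η.comp f)).ncard ≤ l})
    {T : Type*} (F : (X ↪[L] K) → T)
    (hF : ∀ t, {f : X ↪[L] K | F f = t} = ∅ ∨ EmbUnavoidable {f | F f = t}) :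
    {t | ∃ f, F f = t}.Finite ∧ {t | ∃ f, F f = t}.ncard ≤ Rn := by
  classical
  set S := {t | ∃ f, F f = t} with hS
  have key : ∀ (ts : Fin (Rn + 1) → T), Function.Injective ts → ¬∀ i, ts i ∈ S := by
    intro ts hinj hmemS
    have huna : ∀ i, EmbUnavoidable {f : X ↪[L] K | F f = ts i} := by
      intro i
      rcases hF (ts i) with h | h
      · obtain ⟨f, hf⟩ := hmemS i
        exact absurd (Set.eq_empty_iff_forall_notMem.1 h f) (by simp [hf])
      · exact h
    set δ : (X ↪[L] K) → Fin (Rn + 1) := fun f =>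
      if h : ∃ i, F f = ts i then h.choose else 0 with hδ
    obtain ⟨η, hη⟩ := hmem (Rn + 1) δ
    have hsurj : ∀ i : Fin (Rn + 1), ∃ f : X ↪[L] K, δ (η.comp f) = i := by
      intro i
      obtain ⟨f, hf⟩ := huna i η
      refine ⟨f, ?_⟩
      have hex : ∃ j, F (η.comp f) = ts j := ⟨i, hf⟩
      rw [hδ]
      simp only [hex, dif_pos]
      exact hinj (hex.choose_spec.symm.trans hf)
    have : (Set.range fun f : X ↪[L] K => δ (η.comp f)) = Set.univ :=
      Set.eq_univ_of_forall fun i => (hsurj i).imp (fun f hf => hf)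
    rw [this, Set.ncard_univ, Nat.card_eq_fintype_card, Fintype.card_fin] at hη
    omega
  constructor
  · by_contra hinf
    obtain ⟨ts, hinj, hmemS⟩ := exists_inj_mem (s := S) (m := Rn + 1) (Or.inr hinf)
    exact key ts hinj hmemS
  · by_contra hgt
    push_neg at hgt
    obtain ⟨ts, hinj, hmemS⟩ := exists_inj_mem (s := S) (m := Rn + 1) (Or.inl hgt)
    exact key ts hinj hmemS

/-- From ultrahomogeneity: any tuple inside a substructure `P` whose pattern matches `x`
admits an embedding of `P` into `K` carrying the tuple to `x`. -/
lemma exists_emb_of_patEq [L.IsRelational] (hK : L.IsUltrahomogeneous K)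
    (P : L.Substructure K) {k : ℕ} {x : Fin k → K} (u : Fin k → ↥P)
    (hp : PatEq (L := L) x fun i => (u i : K)) :
    ∃ g : ↥P ↪[L] K, ∀ i, g (u i) = x i := by
  classical
  set s : Set K := Set.range (fun i => (u i : K)) with hs
  set S : L.Substructure K := Substructure.closure L s with hSdef
  have hmemS : ∀ z : K, z ∈ S ↔ z ∈ s := fun z =>
    Substructure.mem_closure_iff_of_isRelational L s z
  have hidx : ∀ z : ↥S, ∃ i, (u i : K) = (z : K) := by
    intro z
    have := (hmemS (z : K)).1 z.2
    obtain ⟨i, hi⟩ := this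
    exact ⟨i, hi⟩
  choose idx hidx' using hidx
  have hFG : S.FG := by
    refine ⟨(Set.finite_range (fun i => (u i : K))).toFinset, ?_⟩
    rw [Set.Finite.coe_toFinset]
  -- the partial embedding sending (u i) to (x i)
  have hker : ∀ i j, x i = x j ↔ (u i : K) = (u j : K) := hp.1
  let e : ↥S ↪[L] K :=
    { toFun := fun z => x (idx z)
      inj' := by
        intro z z' hzz
        have h1 : (u (idx z) : K) = (u (idx z') : K) := (hker _ _).1 hzz
        have : (z : K) = (z' : K) := by rw [← hidx' z, ← hidx' z', h1]
        exact Subtype.coe_injective this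
      map_fun' := fun {n} f => isEmptyElim f
      map_rel' := by
        intro l r v
        have h2 := hp.2 l r (fun j => idx (v j))
        have hv : ((fun i : Fin k => (u i : K)) ∘ fun j => idx (v j)) =
            fun j => ((v j : ↥S) : K) := by
          funext j
          exact hidx' (v j)
        rw [hv] at h2
        show Structure.RelMap r (x ∘ fun j => idx (v j)) ↔
          Structure.RelMap r (fun j => ((v j : ↥S) : K))
        exact h2 }
  obtain ⟨gE, hgE⟩ := hK S hFG e
  refine ⟨gE.toEmbedding.comp P.subtype, fun i => ?_⟩
  have hmem : ((u i : K)) ∈ S := (hmemS _).2 ⟨i, rfl⟩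
  have : gE ((u i : K)) = e ⟨(u i : K), hmem⟩ := by
    rw [hgE]; rfl
  have he : e ⟨(u i : K), hmem⟩ = x (idx ⟨(u i : K), hmem⟩) := rfl
  have hxi : x (idx ⟨(u i : K), hmem⟩) = x i := by
    rw [hker]
    exact hidx' ⟨(u i : K), hmem⟩
  calc (gE.toEmbedding.comp P.subtype) (u i) = gE ((u i : K)) := rfl
    _ = x i := by rw [this, he, hxi]

end Generic

section Ctx2

variable (A : ℕ → L.Substructure K) {C : ℕ → Type z} (γ : ∀ n, (↥(A n) ↪[L] K) → C n)

lemma realAt_nonempty [L.IsRelational] (hK : L.IsUltrahomogeneous K)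
    {k : ℕ} (x : Fin k → K) {n : ℕ} (hn : n ∈ lvl A x) :
    (RealAt A γ n x).Nonempty := by
  obtain ⟨u, hu⟩ := hn
  obtain ⟨g, hg⟩ := exists_emb_of_patEq hK (A n) u hu
  exact ⟨(γ n g, u), g, rfl, hg⟩

lemma eqv_refl [L.IsRelational] (hK : L.IsUltrahomogeneous K) (hmono : Monotone A)
    (hcover : ∀ a : K, ∃ n, a ∈ A n) {k : ℕ} (x : Fin k → K) : EQV A γ x x := by
  obtain ⟨p, hp⟩ := realAt_nonempty A γ hK x (n0_mem A hmono hcover x)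
  exact ⟨PatEq.refl x, p, p, hp, hp, Relation.EqvGen.refl p⟩

lemma eqv_symm {k : ℕ} {x y : Fin k → K} (h : EQV A γ x y) : EQV A γ y x := by
  obtain ⟨hpat, p, q, hp, hq, hch⟩ := h
  exact eqv_intro A γ hpat.symm (n0_congr A hpat.symm) hq hp
    (Relation.EqvGen.symm _ _ hch)

lemma eqv_trans {k : ℕ} {x y z : Fin k → K} (h1 : EQV A γ x y) (h2 : EQV A γ y z) :
    EQV A γ x z := by
  obtain ⟨hpat1, p1, q1, hp1, hq1, hch1⟩ := h1
  have hn : n0 A y = n0 A x := (n0_congr A hpat1).symm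
  obtain ⟨hpat2, p2, q2, hp2, hq2, hch2⟩ := eqv_elim A γ h2 hn
  refine ⟨hpat1.trans hpat2, p1, q2, hp1, hq2, ?_⟩
  have hlink : Linked A γ (n0 A x) k q1 p2 := ⟨y, hq1, hp2⟩
  exact Relation.EqvGen.trans _ _ _
    (Relation.EqvGen.trans _ _ _ hch1 (Relation.EqvGen.rel _ _ hlink)) hch2

lemma eqvGen_map {α β : Type*} {r : α → α → Prop} {r' : β → β → Prop} (F : α → β)
    (hF : ∀ a b, r a b → r' (F a) (F b)) {a b : α} (h : Relation.EqvGen r a b) :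
    Relation.EqvGen r' (F a) (F b) := by
  induction h with
  | rel a b hab => exact Relation.EqvGen.rel _ _ (hF a b hab)
  | refl a => exact Relation.EqvGen.refl _
  | symm a b _ ih => exact Relation.EqvGen.symm _ _ ih
  | trans a b c _ _ ih1 ih2 => exact Relation.EqvGen.trans _ _ _ ih1 ih2

lemma lvl_comp_surj {k k' : ℕ} (x : Fin k → K) {σ : Fin k' → Fin k}
    (hσ : Function.Surjective σ) : lvl A (x ∘ σ) = lvl A x := by
  ext n
  constructor
  · rintro ⟨u, hu⟩
    obtain ⟨sec, hsec⟩ := hσ.hasRightInverse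
    refine ⟨u ∘ sec, ?_⟩
    have h2 := hu.comp sec
    have hxs : (x ∘ σ) ∘ sec = x := by
      funext i; simp [Function.comp, hsec i]
    rwa [hxs] at h2
  · rintro ⟨u, hu⟩
    exact ⟨u ∘ σ, hu.comp σ⟩

lemma realAt_comp {n k k' : ℕ} {x : Fin k → K} {p : C n × (Fin k → ↥(A n))}
    (hp : p ∈ RealAt A γ n x) (σ : Fin k' → Fin k) :
    (p.1, p.2 ∘ σ) ∈ RealAt A γ n (x ∘ σ) := by
  obtain ⟨g, hg1, hg2⟩ := hp
  exact ⟨g, hg1, fun i => hg2 (σ i)⟩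

lemma eqv_comp_surj {k k' : ℕ} {x y : Fin k → K} (h : EQV A γ x y)
    {σ : Fin k' → Fin k} (hσ : Function.Surjective σ) : EQV A γ (x ∘ σ) (y ∘ σ) := by
  obtain ⟨hpat, p, q, hp, hq, hch⟩ := h
  have hn : n0 A (x ∘ σ) = n0 A x := by unfold n0; rw [lvl_comp_surj A x hσ]
  refine eqv_intro A γ (hpat.comp σ) hn (realAt_comp A γ hp σ) (realAt_comp A γ hq σ) ?_
  refine eqvGen_map (fun pp => (pp.1, pp.2 ∘ σ)) ?_ hch
  rintro a b ⟨t, hta, htb⟩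
  exact ⟨t ∘ σ, realAt_comp A γ hta σ, realAt_comp A γ htb σ⟩

end Ctx2

section EmbTuple

variable [L.IsRelational] {B : L.Substructure K} {kB : ℕ} (ea : Fin kB ≃ ↥B)

/-- Build an embedding of `B` into `K` from a tuple with the same pattern as `B`'s enumeration. -/
noncomputable def embOfTuple {y : Fin kB → K}
    (hy : PatEq (L := L) (fun i => ((ea i : ↥B) : K)) y) : ↥B ↪[L] K where
  toFun b := y (ea.symm b)
  inj' := by
    intro b b' hbb
    have h1 := (hy.1 (ea.symm b) (ea.symm b')).2 hbb
    simp only [Equiv.apply_symm_apply] at h1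
    exact Subtype.coe_injective h1
  map_fun' := fun {n} f => isEmptyElim f
  map_rel' := by
    intro l r v
    have h2 := hy.2 l r (fun j => ea.symm (v j))
    have hv : ((fun i => ((ea i : ↥B) : K)) ∘ fun j => ea.symm (v j)) =
        fun j => ((v j : ↥B) : K) := by
      funext j; simp
    rw [hv] at h2
    show Structure.RelMap r (y ∘ fun j => ea.symm (v j)) ↔
      Structure.RelMap r (fun j => ((v j : ↥B) : K))
    exact h2.symm

lemma embOfTuple_apply {y : Fin kB → K}
    (hy : PatEq (L := L) (fun i => ((ea i : ↥B) : K)) y) (b : ↥B) :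
    embOfTuple ea hy b = y (ea.symm b) := rfl

lemma embOfTuple_congr {y y' : Fin kB → K} (hyy : y = y')
    (h1 : PatEq (L := L) (fun i => ((ea i : ↥B) : K)) y)
    (h2 : PatEq (L := L) (fun i => ((ea i : ↥B) : K)) y') :
    embOfTuple ea h1 = embOfTuple ea h2 := by
  subst hyy
  rfl

lemma embOfTuple_eq_emb {y : Fin kB → K}
    (hy : PatEq (L := L) (fun i => ((ea i : ↥B) : K)) y) (h : ↥B ↪[L] K)
    (hval : ∀ i, y i = h (ea i)) : embOfTuple ea hy = h := by
  apply Language.Embedding.ext  -- check name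
  intro b
  rw [embOfTuple_apply, hval (ea.symm b), Equiv.apply_symm_apply]

end EmbTuple

section Main

variable [L.IsRelational]
variable (A : ℕ → L.Substructure K) {C : ℕ → Type z} (γ : ∀ n, (↥(A n) ↪[L] K) → C n)

/-- Each level has at least one color. -/
lemma R_pos (R : ℕ → ℕ) (hR : ∀ n, HasBigRamseyDegree (L := L) ↥(A n) K (R n)) (n : ℕ) :
    1 ≤ R n := by
  obtain ⟨η, hη⟩ := (hR n).1 1 (fun _ => (0 : Fin 1))
  haveI : Nonempty (↥(A n) ↪[L] K) := ⟨(A n).subtype⟩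
  rwa [Set.range_const, Set.ncard_singleton] at hη

lemma range_gamma_finite (R : ℕ → ℕ) (hR : ∀ n, HasBigRamseyDegree (L := L) ↥(A n) K (R n))
    (hu : ∀ n, UnavoidableColoring (γ n) ∧ (Set.range (γ n)).ncard = R n) (n : ℕ) :
    (Set.range (γ n)).Finite := by
  apply Set.finite_of_ncard_ne_zero
  rw [(hu n).2]
  have := R_pos A R hR n
  omega

/-- Witness below an arbitrary self-embedding for any achieved color. -/
lemma color_below {n : ℕ} (huc : UnavoidableColoring (γ n))
    (ζ : K ↪[L] K) {c : C n} (hc : c ∈ Set.range (γ n)) :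
    ∃ g : ↥(A n) ↪[L] K, γ n (ζ.comp g) = c := by
  rcases huc c with h | h
  · obtain ⟨g₀, hg₀⟩ := hc
    have := Set.eq_empty_iff_forall_notMem.1 h g₀
    simp only [Set.mem_preimage, Set.mem_singleton_iff] at this
    exact absurd hg₀ this
  · obtain ⟨f, hf⟩ := h ζ
    exact ⟨f, hf⟩

variable {B : L.Substructure K} {kB : ℕ}

/-- Main upper bound lemma: there is a self-embedding below which the coloring `δ`
only depends on the `EQV`-class of the full tuple. -/
lemma upper_main (hK : L.IsUltrahomogeneous K) (hmono : Monotone A)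
    (hcover : ∀ a : K, ∃ n, a ∈ A n)
    (hfin : ∀ n, ((A n : Set K)).Finite)
    {R : ℕ → ℕ} (hR : ∀ n, HasBigRamseyDegree (L := L) ↥(A n) K (R n))
    (hu : ∀ n, UnavoidableColoring (γ n) ∧ (Set.range (γ n)).ncard = R n)
    (href : ∀ m n, m ≤ n → ∀ (f : ↥(A m) ↪[L] ↥(A n)) (s₀ s₁ : ↥(A n) ↪[L] K),
      γ n s₀ = γ n s₁ → γ m (s₀.comp f) = γ m (s₁.comp f))
    (ea : Fin kB ≃ ↥B) (r : ℕ) (δ : (↥B ↪[L] K) → Fin r) :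
    ∃ ζ : K ↪[L] K, ∀ h h' : ↥B ↪[L] K,
      EQV A γ (fun i => ζ (h (ea i))) (fun i => ζ (h' (ea i))) →
        δ (ζ.comp h) = δ (ζ.comp h') := by
  classical
  set xB : Fin kB → K := fun i => ((ea i : ↥B) : K) with hxB
  set ns : ℕ := n0 A xB with hns
  haveI hFinA : Finite ↥(A ns) := (hfin ns).to_subtype
  -- the type of good positions
  set W := {w : Fin kB → ↥(A ns) // PatEq (L := L) xB (fun i => ((w i : ↥(A ns)) : K))}
    with hW
  haveI : Finite W := Subtype.finite
  -- the joint coloring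
  set Λ : (↥(A ns) ↪[L] K) → C ns × (W → Fin r) := fun g =>
    (γ ns g, fun w => δ (embOfTuple ea (w.2.trans (patEq_emb (A ns).subtype g w.1))))
    with hΛ
  have hΛfin : {t | ∃ g, Λ g = t}.Finite := by
    apply Set.Finite.subset
      (Set.Finite.prod (range_gamma_finite A γ R hR hu ns)
        (Set.finite_univ (α := W → Fin r)))
    rintro t ⟨g, rfl⟩
    exact ⟨⟨g, rfl⟩, trivial⟩
  obtain ⟨ζ, hζ⟩ := purify Λ hΛfin
  set V := {t | ∃ g, Λ (ζ.comp g) = t} with hV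
  have hVle := achieved_le (hR ns).1 (fun g => Λ (ζ.comp g)) (fun t => hζ t)
  have hVfin : V.Finite := hVle.1
  have hVcard : V.ncard ≤ R ns := hVle.2
  -- fst surjects onto the colors
  have hfstV : Prod.fst '' V = Set.range (γ ns) := by
    apply Set.Subset.antisymm
    · rintro c ⟨t, ⟨g, rfl⟩, rfl⟩
      exact ⟨ζ.comp g, rfl⟩
    · rintro c hc
      obtain ⟨g, hg⟩ := color_below A γ (hu ns).1 ζ hc
      exact ⟨Λ (ζ.comp g), ⟨g, rfl⟩, hg⟩
  -- fst is injective on V (counting)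
  have hinj : Set.InjOn Prod.fst V := by
    intro t1 ht1 t2 ht2 hfst
    by_contra hne
    have himg : Prod.fst '' (V \ {t2}) = Set.range (γ ns) := by
      rw [← hfstV]
      apply Set.Subset.antisymm (Set.image_mono Set.diff_subset)
      rintro c ⟨t, htV, rfl⟩
      by_cases h : t = t2
      · subst h
        exact ⟨t1, ⟨ht1, by simp [hne]⟩, hfst⟩
      · exact ⟨t, ⟨htV, by simp [h]⟩, rfl⟩
    have h1 : (Set.range (γ ns)).ncard ≤ (V \ {t2}).ncard := by
      rw [← himg]
      exact Set.ncard_image_le hVfin.diff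
    have h2 : (V \ {t2}).ncard < V.ncard :=
      Set.ncard_diff_singleton_lt_of_mem ht2 hVfin
    rw [(hu ns).2] at h1
    omega
  -- the D-property
  have hD : ∀ g g', γ ns (ζ.comp g) = γ ns (ζ.comp g') →
      (Λ (ζ.comp g)).2 = (Λ (ζ.comp g')).2 := by
    intro g g' hgg
    have e1 : Λ (ζ.comp g) ∈ V := ⟨g, rfl⟩
    have e2 : Λ (ζ.comp g') ∈ V := ⟨g', rfl⟩
    exact congrArg Prod.snd (hinj e1 e2 hgg)
  -- goodness of pairs
  set GOODP : C ns × (Fin kB → ↥(A ns)) → Prop := fun p =>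
    PatEq (L := L) xB (fun i => ((p.2 i : ↥(A ns)) : K)) with hGOODP
  set GOODC : C ns × (Fin kB → ↥(A ns)) → Prop := fun p =>
    ∃ g, γ ns (ζ.comp g) = p.1 with hGOODC
  -- chain invariance
  have hchaininv : ∀ p q, Relation.EqvGen (Linked A γ ns kB) p q →
      (GOODP p ↔ GOODP q) ∧ (GOODC p ↔ GOODC q) ∧
      ∀ (hp : GOODP p) (hq : GOODP q) (g1 g2 : ↥(A ns) ↪[L] K),
        γ ns (ζ.comp g1) = p.1 → γ ns (ζ.comp g2) = q.1 →
        (Λ (ζ.comp g1)).2 ⟨p.2, hp⟩ = (Λ (ζ.comp g2)).2 ⟨q.2, hq⟩ := by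
    intro p q hch
    induction hch with
    | rel p q hl =>
      obtain ⟨t, ⟨gp, hgp1, hgp2⟩, ⟨gq, hgq1, hgq2⟩⟩ := hl
      have hpt : PatEq (L := L) (fun i => ((p.2 i : ↥(A ns)) : K)) t := by
        have h1 := patEq_emb (A ns).subtype gp p.2
        have h3 : (fun i => gp (p.2 i)) = t := funext hgp2
        rwa [h3] at h1
      have hqt : PatEq (L := L) (fun i => ((q.2 i : ↥(A ns)) : K)) t := by
        have h1 := patEq_emb (A ns).subtype gq q.2
        have h3 : (fun i => gq (q.2 i)) = t := funext hgq2
        rwa [h3] at h1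
      have hdirP : GOODP p ↔ GOODP q :=
        ⟨fun h => h.trans (hpt.trans hqt.symm), fun h => h.trans (hqt.trans hpt.symm)⟩
      have hdirC : GOODC p ↔ GOODC q := by
        constructor
        · intro _
          exact color_below A γ (hu ns).1 ζ ⟨gq, hgq1⟩
        · intro _
          exact color_below A γ (hu ns).1 ζ ⟨gp, hgp1⟩
      refine ⟨hdirP, hdirC, ?_⟩
      intro hp hq g1 g2 hg1 hg2
      -- capture both witnesses in one level
      obtain ⟨M, hMns, hMsub⟩ := capture A hmono hcover
        ((Set.finite_range (⇑gp)).union (Set.finite_range (⇑gq))) ns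
      have hgpmem : ∀ b, gp b ∈ A M := fun b => hMsub (Or.inl ⟨b, rfl⟩)
      have hgqmem : ∀ b, gq b ∈ A M := fun b => hMsub (Or.inr ⟨b, rfl⟩)
      set u1 := Language.Embedding.codRestrict (A M) gp hgpmem with hu1
      set u2 := Language.Embedding.codRestrict (A M) gq hgqmem with hu2
      obtain ⟨S, hS⟩ : ∃ S : ↥(A M) ↪[L] K, γ M (ζ.comp S) = γ M ((A M).subtype) :=
        color_below A γ (hu M).1 ζ ⟨(A M).subtype, rfl⟩
      have htr : ∀ (g0 : ↥(A ns) ↪[L] K) (u : ↥(A ns) ↪[L] ↥(A M)),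
          (A M).subtype.comp u = g0 → γ ns (ζ.comp (S.comp u)) = γ ns g0 := by
        intro g0 u hu0
        have h5 := href ns M hMns u (ζ.comp S) ((A M).subtype) hS
        calc γ ns (ζ.comp (S.comp u)) = γ ns ((ζ.comp S).comp u) := by
              rw [Language.Embedding.comp_assoc]
          _ = γ ns ((A M).subtype.comp u) := h5
          _ = γ ns g0 := by rw [hu0]
      have htr1 : γ ns (ζ.comp (S.comp u1)) = p.1 := by
        rw [htr gp u1 (Language.Embedding.subtype_comp_codRestrict gp (A M) hgpmem), hgp1]
      have htr2 : γ ns (ζ.comp (S.comp u2)) = q.1 := by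
        rw [htr gq u2 (Language.Embedding.subtype_comp_codRestrict gq (A M) hgqmem), hgq1]
      have hsame : (fun i => (ζ.comp (S.comp u1)) (p.2 i)) =
          (fun i => (ζ.comp (S.comp u2)) (q.2 i)) := by
        funext i
        have hco : (u1 (p.2 i) : K) = (u2 (q.2 i) : K) := by
          calc (u1 (p.2 i) : K) = gp (p.2 i) := by rw [hu1]; rfl
            _ = t i := hgp2 i
            _ = gq (q.2 i) := (hgq2 i).symm
            _ = (u2 (q.2 i) : K) := by rw [hu2]; rfl
        have : u1 (p.2 i) = u2 (q.2 i) := Subtype.coe_injective hco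
        show ζ (S (u1 (p.2 i))) = ζ (S (u2 (q.2 i)))
        rw [this]
      have hval : (Λ (ζ.comp (S.comp u1))).2 ⟨p.2, hp⟩ =
          (Λ (ζ.comp (S.comp u2))).2 ⟨q.2, hq⟩ := by
        show δ (embOfTuple ea _) = δ (embOfTuple ea _)
        exact congrArg δ (embOfTuple_congr ea hsame _ _)
      calc (Λ (ζ.comp g1)).2 ⟨p.2, hp⟩
          = (Λ (ζ.comp (S.comp u1))).2 ⟨p.2, hp⟩ := by
            rw [hD g1 (S.comp u1) (hg1.trans htr1.symm)]
        _ = (Λ (ζ.comp (S.comp u2))).2 ⟨q.2, hq⟩ := hval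
        _ = (Λ (ζ.comp g2)).2 ⟨q.2, hq⟩ := by
            rw [hD (S.comp u2) g2 (htr2.trans hg2.symm)]
    | refl p =>
      refine ⟨Iff.rfl, Iff.rfl, ?_⟩
      intro hp hq g1 g2 hg1 hg2
      rw [hD g1 g2 (hg1.trans hg2.symm)]
    | symm p q hpq ih =>
      refine ⟨ih.1.symm, ih.2.1.symm, ?_⟩
      intro hp hq g1 g2 hg1 hg2
      exact (ih.2.2 hq hp g2 g1 hg2 hg1).symm
    | trans p q rr hpq hqr ih1 ih2 =>
      refine ⟨ih1.1.trans ih2.1, ih1.2.1.trans ih2.2.1, ?_⟩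
      intro hp hq g1 g2 hg1 hg2
      have hqP : GOODP q := ih1.1.1 hp
      have hqC : GOODC q := ih1.2.1.1 ⟨g1, hg1⟩
      obtain ⟨gm, hgm⟩ := hqC
      exact (ih1.2.2 hp hqP g1 gm hg1 hgm).trans (ih2.2.2 hqP hq gm g2 hgm hg2)
  -- conclusion
  refine ⟨ζ, fun h h' hEQ => ?_⟩
  have hpat_h : PatEq (L := L) xB (fun i => h (ea i)) := patEq_emb B.subtype h ea
  have hpat_h' : PatEq (L := L) xB (fun i => h' (ea i)) := patEq_emb B.subtype h' ea
  have hth : n0 A (fun i => ζ (h (ea i))) = ns :=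
    n0_congr A (patEq_emb (ζ.comp h) B.subtype ea)
  have hlvlh : ns ∈ lvl A (fun i => h (ea i)) := by
    rw [← lvl_congr A hpat_h]
    exact n0_mem A hmono hcover xB
  have hlvlh' : ns ∈ lvl A (fun i => h' (ea i)) := by
    rw [← lvl_congr A hpat_h']
    exact n0_mem A hmono hcover xB
  obtain ⟨u, hu'⟩ := hlvlh
  obtain ⟨g, hg⟩ := exists_emb_of_patEq hK (A ns) u hu'
  obtain ⟨u', hu''⟩ := hlvlh'
  obtain ⟨g', hg'⟩ := exists_emb_of_patEq hK (A ns) u' hu''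
  have hp0 : ((γ ns (ζ.comp g), u) : C ns × (Fin kB → ↥(A ns))) ∈
      RealAt A γ ns (fun i => ζ (h (ea i))) :=
    ⟨ζ.comp g, rfl, fun i => by show ζ (g (u i)) = ζ (h (ea i)); rw [hg i]⟩
  have hp0' : ((γ ns (ζ.comp g'), u') : C ns × (Fin kB → ↥(A ns))) ∈
      RealAt A γ ns (fun i => ζ (h' (ea i))) :=
    ⟨ζ.comp g', rfl, fun i => by show ζ (g' (u' i)) = ζ (h' (ea i)); rw [hg' i]⟩
  obtain ⟨hpatEQ, p, q, hp, hq, hch⟩ := eqv_elim A γ hEQ hth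
  have l1 : Linked A γ ns kB (γ ns (ζ.comp g), u) p := ⟨_, hp0, hp⟩
  have l2 : Linked A γ ns kB q (γ ns (ζ.comp g'), u') := ⟨_, hq, hp0'⟩
  have hfull : Relation.EqvGen (Linked A γ ns kB) (γ ns (ζ.comp g), u)
      (γ ns (ζ.comp g'), u') :=
    Relation.EqvGen.trans _ _ _ (Relation.EqvGen.rel _ _ l1)
      (Relation.EqvGen.trans _ _ _ hch (Relation.EqvGen.rel _ _ l2))
  have hgoodp : GOODP (γ ns (ζ.comp g), u) := hpat_h.trans hu'
  have hgoodq : GOODP (γ ns (ζ.comp g'), u') := hpat_h'.trans hu''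
  have hkey := (hchaininv _ _ hfull).2.2 hgoodp hgoodq g g' rfl rfl
  have lhs : (Λ (ζ.comp g)).2 ⟨u, hgoodp⟩ = δ (ζ.comp h) :=
    congrArg δ (embOfTuple_eq_emb ea _ (ζ.comp h) fun i => by
      show (ζ.comp g) (u i) = (ζ.comp h) (ea i)
      show ζ (g (u i)) = ζ (h (ea i))
      rw [hg i])
  have rhs : (Λ (ζ.comp g')).2 ⟨u', hgoodq⟩ = δ (ζ.comp h') :=
    congrArg δ (embOfTuple_eq_emb ea _ (ζ.comp h') fun i => by
      show (ζ.comp g') (u' i) = (ζ.comp h') (ea i)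
      show ζ (g' (u' i)) = ζ (h' (ea i))
      rw [hg' i])
  rw [← lhs, ← rhs]
  exact hkey

lemma exists_decomp {kB : ℕ} (ea : Fin kB ≃ ↥B) {k' : ℕ} (a : Fin k' → ↥B) :
    ∃ (m : ℕ) (aInj : Fin m → ↥B) (σ : Fin k' → Fin m),
      m ≤ kB ∧ Function.Surjective σ ∧ a = aInj ∘ σ := by
  classical
  haveI : Finite ↥B := Finite.of_equiv _ ea
  haveI : Fintype ↥B := Fintype.ofFinite _
  set s : Finset ↥B := Finset.univ.image a with hs
  refine ⟨s.card, fun j => (s.equivFin.symm j : ↥B), fun i => s.equivFin ⟨a i, ?_⟩, ?_, ?_, ?_⟩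
  · rw [hs]; exact Finset.mem_image_of_mem a (Finset.mem_univ i)
  · calc s.card ≤ Fintype.card ↥B := Finset.card_le_univ s
      _ = kB := by rw [← Fintype.card_fin kB]; exact (Fintype.card_congr ea).symm
  · intro j
    obtain ⟨b, hb⟩ : ∃ b : ↥s, s.equivFin.symm j = b := ⟨_, rfl⟩
    obtain ⟨i, -, hi⟩ := Finset.mem_image.1 b.2
    refine ⟨i, ?_⟩
    have heq : (⟨a i, by rw [hs]; exact Finset.mem_image_of_mem a (Finset.mem_univ i)⟩ : ↥s) = b := by
      apply Subtype.coe_injective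
      simp [hi]
    show s.equivFin ⟨a i, _⟩ = j
    rw [heq, ← hb]
    simp
  · funext i
    simp

lemma unav_main (hK : L.IsUltrahomogeneous K) (hmono : Monotone A)
    (hcover : ∀ a : K, ∃ n, a ∈ A n) (hfin : ∀ n, ((A n : Set K)).Finite)
    (hu : ∀ n, UnavoidableColoring (γ n))
    (href : ∀ m n, m ≤ n → ∀ (f : ↥(A m) ↪[L] ↥(A n)) (s₀ s₁ : ↥(A n) ↪[L] K),
      γ n s₀ = γ n s₁ → γ m (s₀.comp f) = γ m (s₁.comp f))
    {kB : ℕ} (ea : Fin kB ≃ ↥B) (h₀ : ↥B ↪[L] K) (η : K ↪[L] K) :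
    ∃ f : ↥B ↪[L] K, ∀ (k' : ℕ) (a : Fin k' → ↥B),
      EQV A γ (fun i => h₀ (a i)) (fun i => (η.comp f) (a i)) := by
  classical
  haveI : Finite ↥B := Finite.of_equiv _ ea
  set IDX := Σ k' : Fin (kB + 1), (Fin (k' : ℕ) → ↥B) with hIDX
  haveI : Finite IDX := by infer_instance
  set nd : IDX → ℕ := fun d => n0 A (fun i => h₀ (d.2 i)) with hnd
  have hdata : ∀ d : IDX, ∃ (u : Fin (d.1 : ℕ) → ↥(A (nd d)))
      (g : ↥(A (nd d)) ↪[L] K),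
      PatEq (L := L) (fun i => h₀ (d.2 i)) (fun i => (u i : K)) ∧
        ∀ i, g (u i) = h₀ (d.2 i) := by
    intro d
    obtain ⟨u, hu'⟩ := n0_mem A hmono hcover (fun i => h₀ (d.2 i))
    obtain ⟨g, hg⟩ := exists_emb_of_patEq hK _ u hu'
    exact ⟨u, g, hu', hg⟩
  choose uD gD hpatD hgD using hdata
  have hfinbig : (Set.range (fun b : ↥B => h₀ b) ∪
      ⋃ d : IDX, Set.range (⇑(gD d))).Finite := by
    refine Set.Finite.union (Set.finite_range _) (Set.finite_iUnion fun d => ?_)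
    haveI : Finite ↥(A (nd d)) := (hfin (nd d)).to_subtype
    exact Set.finite_range _
  obtain ⟨M₁, -, hM₁⟩ := capture A hmono hcover hfinbig 0
  obtain ⟨M₂, hM₂⟩ : ∃ M₂, ∀ d : IDX, nd d ≤ M₂ := by
    haveI : Fintype IDX := Fintype.ofFinite _
    exact ⟨Finset.univ.sup nd, fun d => Finset.le_sup (Finset.mem_univ d)⟩
  set M := max M₁ M₂ with hM
  have hsub : (Set.range (fun b : ↥B => h₀ b) ∪
      ⋃ d : IDX, Set.range (⇑(gD d))) ⊆ (A M : Set K) :=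
    hM₁.trans (SetLike.coe_subset_coe.2 (hmono (le_max_left _ _)))
  have hndM : ∀ d, nd d ≤ M := fun d => (hM₂ d).trans (le_max_right _ _)
  have hh₀mem : ∀ b, h₀ b ∈ A M := fun b => hsub (Or.inl ⟨b, rfl⟩)
  have hgDmem : ∀ (d : IDX) (b : ↥(A (nd d))), gD d b ∈ A M := fun d b =>
    hsub (Or.inr (Set.mem_iUnion.2 ⟨d, ⟨b, rfl⟩⟩))
  set vB := Language.Embedding.codRestrict (A M) h₀ hh₀mem with hvB
  set uDM : ∀ d : IDX, ↥(A (nd d)) ↪[L] ↥(A M) := fun d =>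
    Language.Embedding.codRestrict (A M) (gD d) (hgDmem d) with huDM
  obtain ⟨S, hS⟩ : ∃ S : ↥(A M) ↪[L] K, γ M (η.comp S) = γ M ((A M).subtype) :=
    color_below A γ (hu M) η ⟨(A M).subtype, rfl⟩
  refine ⟨S.comp vB, fun k' a => ?_⟩
  -- first, the case of small tuples
  have hsmall : ∀ d : IDX, EQV A γ (fun i => h₀ (d.2 i))
      (fun i => (η.comp (S.comp vB)) (d.2 i)) := by
    intro d
    have hpat : PatEq (L := L) (fun i => h₀ (d.2 i))
        (fun i => (η.comp (S.comp vB)) (d.2 i)) := patEq_emb h₀ (η.comp (S.comp vB)) d.2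
    refine eqv_intro A γ hpat rfl
      (p := (γ (nd d) (gD d), uD d)) (q := (γ (nd d) (gD d), uD d))
      ⟨gD d, rfl, hgD d⟩ ?_ (Relation.EqvGen.refl _)
    -- membership in RealAt for the image tuple
    refine ⟨(η.comp S).comp (uDM d), ?_, ?_⟩
    · have h5 := href (nd d) M (hndM d) (uDM d) (η.comp S) ((A M).subtype) hS
      have h6 : (A M).subtype.comp (uDM d) = gD d :=
        Language.Embedding.subtype_comp_codRestrict (gD d) (A M) (hgDmem d)
      show γ (nd d) ((η.comp S).comp (uDM d)) = γ (nd d) (gD d)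
      rw [h5, h6]
    · intro i
      have hco : uDM d (uD d i) = vB (d.2 i) := by
        apply Subtype.coe_injective
        show ((uDM d (uD d i) : K)) = ((vB (d.2 i) : K))
        rw [huDM, hvB]
        show gD d (uD d i) = h₀ (d.2 i)
        exact hgD d i
      show η (S (uDM d (uD d i))) = (η.comp (S.comp vB)) (d.2 i)
      rw [hco]
      rfl
  -- general tuples via decomposition
  obtain ⟨m, aInj, σ, hm, hσ, haσ⟩ := exists_decomp ea a
  have hd := hsmall ⟨⟨m, Nat.lt_succ_of_le hm⟩, aInj⟩
  have := eqv_comp_surj A γ hd hσ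
  have e1 : ((fun i => h₀ (aInj i)) ∘ σ) = fun i => h₀ (a i) := by
    funext i
    simp only [Function.comp]
    rw [haσ]
    rfl
  have e2 : ((fun i => (η.comp (S.comp vB)) (aInj i)) ∘ σ) =
      fun i => (η.comp (S.comp vB)) (a i) := by
    funext i
    simp only [Function.comp]
    rw [haσ]
    rfl
  rwa [e1, e2] at this

/-- A finite classifier for the kernel of the `EQV`-data of embeddings of `B`. -/
lemma ker_classifier (hK : L.IsUltrahomogeneous K) (hmono : Monotone A)
    (hcover : ∀ a : K, ∃ n, a ∈ A n) (hfin : ∀ n, ((A n : Set K)).Finite)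
    {R : ℕ → ℕ} (hR : ∀ n, HasBigRamseyDegree (L := L) ↥(A n) K (R n))
    (hu : ∀ n, UnavoidableColoring (γ n) ∧ (Set.range (γ n)).ncard = R n)
    {kB : ℕ} (ea : Fin kB ≃ ↥B) :
    ∃ (T : Type (max w z)) (_ : Finite T) (F : (↥B ↪[L] K) → T),
      ∀ h h' : ↥B ↪[L] K, F h = F h' ↔
        ∀ (k' : ℕ) (a : Fin k' → ↥B),
          EQV A γ (fun i => h (a i)) (fun i => h' (a i)) := by
  classical
  haveI : Finite ↥B := Finite.of_equiv _ ea
  set IDX := Σ k' : Fin (kB + 1), (Fin (k' : ℕ) → ↥B) with hIDX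
  haveI : Finite IDX := by infer_instance
  set nd : IDX → ℕ := fun d => n0 A (fun i => ((d.2 i : ↥B) : K)) with hnd
  have hnh : ∀ (h : ↥B ↪[L] K) (d : IDX), n0 A (fun i => h (d.2 i)) = nd d := by
    intro h d
    exact n0_congr A (patEq_emb h B.subtype d.2)
  set PT : IDX → Type (max w z) := fun d => C (nd d) × (Fin (d.1 : ℕ) → ↥(A (nd d)))
    with hPT
  set GOODd : ∀ d : IDX, Set (PT d) := fun d =>
    (Set.range (γ (nd d))) ×ˢ (Set.univ : Set (Fin (d.1 : ℕ) → ↥(A (nd d)))) with hGOODd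
  have hGOODfin : ∀ d, (GOODd d).Finite := by
    intro d
    haveI : Finite ↥(A (nd d)) := (hfin (nd d)).to_subtype
    exact Set.Finite.prod (range_gamma_finite A γ R hR hu (nd d)) (Set.finite_univ)
  set T : Type (max w z) := ∀ d : IDX, {s : Set (PT d) // s ⊆ GOODd d} with hT
  haveI hTfin : Finite T := by
    haveI : ∀ d : IDX, Finite {s : Set (PT d) // s ⊆ GOODd d} := by
      intro d
      have : {s : Set (PT d) | s ⊆ GOODd d}.Finite := (hGOODfin d).finite_subsets
      exact this.to_subtype
    exact Pi.finite
  set F : (↥B ↪[L] K) → T := fun h d =>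
    ⟨{q | q ∈ GOODd d ∧ ∃ p ∈ RealAt A γ (nd d) (fun i => h (d.2 i)),
        Relation.EqvGen (Linked A γ (nd d) (d.1 : ℕ)) p q},
      fun q hq => hq.1⟩ with hF
  refine ⟨T, hTfin, F, fun h h' => ⟨?_, ?_⟩⟩
  · -- F h = F h' → kernel
    intro hFF
    -- first on small tuples
    have hsmall : ∀ d : IDX, EQV A γ (fun i => h (d.2 i)) (fun i => h' (d.2 i)) := by
      intro d
      have hlvld : nd d ∈ lvl A (fun i => h (d.2 i)) := by
        rw [← hnh h d]
        exact n0_mem A hmono hcover _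
      obtain ⟨p, hp⟩ := realAt_nonempty A γ hK _ hlvld
      have hpG : p ∈ GOODd d := by
        obtain ⟨g, hg1, hg2⟩ := hp
        exact ⟨⟨g, hg1⟩, trivial⟩
      have hpF : p ∈ (F h d : Set (PT d)) := ⟨hpG, p, hp, Relation.EqvGen.refl p⟩
      have hpF' : p ∈ (F h' d : Set (PT d)) := by
        have := congrFun hFF d
        rw [← Subtype.ext_iff.1 this]
        exact hpF
      obtain ⟨-, p₂, hp₂, hch₂⟩ := hpF'
      exact eqv_intro A γ (patEq_emb h h' d.2) (hnh h d) hp hp₂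
        (Relation.EqvGen.symm _ _ hch₂)
    intro k' a
    obtain ⟨m, aInj, σ, hm, hσ, haσ⟩ := exists_decomp ea a
    have hd := hsmall ⟨⟨m, Nat.lt_succ_of_le hm⟩, aInj⟩
    have h2 := eqv_comp_surj A γ hd hσ
    have e1 : ((fun i => h (aInj i)) ∘ σ) = fun i => h (a i) := by
      funext i; simp only [Function.comp]; rw [haσ]; rfl
    have e2 : ((fun i => h' (aInj i)) ∘ σ) = fun i => h' (a i) := by
      funext i; simp only [Function.comp]; rw [haσ]; rfl
    rwa [e1, e2] at h2
  · -- kernel → F h = F h'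
    intro hker
    have hker' : ∀ (k' : ℕ) (a : Fin k' → ↥B),
        EQV A γ (fun i => h' (a i)) (fun i => h (a i)) :=
      fun k' a => eqv_symm A γ (hker k' a)
    have main : ∀ (h1 h2 : ↥B ↪[L] K),
        (∀ (k' : ℕ) (a : Fin k' → ↥B),
          EQV A γ (fun i => h1 (a i)) (fun i => h2 (a i))) →
        ∀ d : IDX, (F h1 d : Set (PT d)) ⊆ (F h2 d : Set (PT d)) := by
      intro h1 h2 hk d q hqF
      obtain ⟨hqG, p, hp, hch⟩ := hqF
      obtain ⟨hpat, p₁, q₁, hp₁, hq₁, hch₁⟩ := eqv_elim A γ (hk (d.1 : ℕ) d.2) (hnh h1 d)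
      refine ⟨hqG, q₁, hq₁, ?_⟩
      have l1 : Linked A γ (nd d) (d.1 : ℕ) p₁ p := ⟨_, hp₁, hp⟩
      exact Relation.EqvGen.trans _ _ _
        (Relation.EqvGen.trans _ _ _ (Relation.EqvGen.symm _ _ hch₁)
          (Relation.EqvGen.rel _ _ l1)) hch
    funext d
    apply Subtype.ext
    exact Set.Subset.antisymm (main h h' hker d) (main h' h hker' d)

end Main

end ZBRS

universe u v

theorem exists_bigRamseyStructure {L : FirstOrder.Language.{u, v}} {K : Type*}
    [iK : L.Structure K] [Countable K] [L.IsRelational] [Countable L.Symbols]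
    (hK : L.IsUltrahomogeneous K)
    (A : ℕ → L.Substructure K) (hmono : Monotone A)
    (hfin : ∀ n, ((A n : Set K)).Finite) (hcover : ∀ x : K, ∃ n, x ∈ A n)
    (R : ℕ → ℕ) (hR : ∀ n, HasBigRamseyDegree (L := L) ↥(A n) K (R n))
    {C : ℕ → Type*} (γ : ∀ n, (↥(A n) ↪[L] K) → C n)
    (hu : ∀ n, UnavoidableColoring (γ n) ∧ (Set.range (γ n)).ncard = R n)
    (href : ∀ m n, m ≤ n → ∀ (f : ↥(A m) ↪[L] ↥(A n)) (s₀ s₁ : ↥(A n) ↪[L] K),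
      γ n s₀ = γ n s₁ → γ m (s₀.comp f) = γ m (s₁.comp f)) :
    ∃ (L' : FirstOrder.Language.{u, v}) (φ : L →ᴸ L') (S' : L'.Structure K),
      L'.IsRelational ∧
      @Language.LHom.IsExpansionOn L L' φ K iK S' ∧
      IsBigRamseyStructure (L := L) L' S' := by
  classical
  obtain ⟨enc, henc⟩ : ∃ enc : (Σ k : ℕ, Fin k → K) → ℕ, Function.Injective enc :=
    (countable_iff_exists_injective _).1 inferInstance
  -- the new language: one relation symbol of each arity for each natural number code
  set Lnew : FirstOrder.Language.{u, v} :=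
    ⟨fun _ => PEmpty, fun _ => ULift ℕ⟩ with hLnew
  letI SNew : Lnew.Structure K :=
    { funMap := fun {n} f _ => PEmpty.elim f
      RelMap := fun {n} R xx => ∃ y : Fin n → K, enc ⟨n, y⟩ = R.down ∧ ZBRS.EQV A γ y xx }
  haveI hLnewRel : Lnew.IsRelational := fun n => ⟨fun f => PEmpty.elim f⟩
  letI SSum : (L.sum Lnew).Structure K := Language.sumStructure L Lnew K
  refine ⟨L.sum Lnew, Language.LHom.sumInl, SSum, inferInstance, inferInstance, ?_⟩
  intro B hB
  haveI hFB : Finite ↥B := hB.to_subtype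
  set kB : ℕ := Nat.card ↥B with hkB
  set ea : Fin kB ≃ ↥B := (Finite.equivFin ↥B).symm with hea
  -- characterization of StructEquiv in terms of EQV
  have S1 : ∀ h h' : ↥B ↪[L] K,
      StructEquiv (L.sum Lnew) SSum h h' ↔
      ∀ (k' : ℕ) (a : Fin k' → ↥B),
        ZBRS.EQV A γ (fun i => h (a i)) (fun i => h' (a i)) := by
    intro h h'
    constructor
    · intro hse k' a
      have hiff := hse k' (Sum.inr (⟨enc ⟨k', fun i => h (a i)⟩⟩ : ULift ℕ)) a
      have hL : SSum.RelMap (Sum.inr (⟨enc ⟨k', fun i => h (a i)⟩⟩ : ULift ℕ))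
          (fun i => h (a i)) := by
        show ∃ y : Fin k' → K, enc ⟨k', y⟩ = enc ⟨k', fun i => h (a i)⟩ ∧
          ZBRS.EQV A γ y (fun i => h (a i))
        exact ⟨_, rfl, ZBRS.eqv_refl A γ hK hmono hcover _⟩
      have hR' := hiff.1 hL
      obtain ⟨y, hy1, hy2⟩ := hR'
      have hy : y = fun i => h (a i) := by
        have h3 := henc hy1
        exact eq_of_heq (Sigma.mk.inj_iff.1 h3).2
      rw [hy] at hy2
      exact hy2
    · intro hk k' R a
      cases R with
      | inl r =>
        show Structure.RelMap r (fun i => h (a i)) ↔ Structure.RelMap r (fun i => h' (a i))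
        exact (h.map_rel r a).trans (h'.map_rel r a).symm
      | inr R =>
        show (∃ y : Fin k' → K, enc ⟨k', y⟩ = R.down ∧ ZBRS.EQV A γ y fun i => h (a i)) ↔
          (∃ y : Fin k' → K, enc ⟨k', y⟩ = R.down ∧ ZBRS.EQV A γ y fun i => h' (a i))
        constructor
        · rintro ⟨y, hy1, hy2⟩
          exact ⟨y, hy1, ZBRS.eqv_trans A γ hy2 (hk k' a)⟩
        · rintro ⟨y, hy1, hy2⟩
          exact ⟨y, hy1, ZBRS.eqv_trans A γ hy2 (ZBRS.eqv_symm A γ (hk k' a))⟩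
  have hSEequiv : Equivalence (StructEquiv (L.sum Lnew) SSum (A := B)) :=
    ⟨fun h k R a => Iff.rfl,
     fun hse k R a => (hse k R a).symm,
     fun h1 h2 k R a => (h1 k R a).trans (h2 k R a)⟩
  -- finiteness of the quotient
  obtain ⟨T, hTfin, F, hF⟩ :=
    ZBRS.ker_classifier A γ hK hmono hcover hfin hR hu ea
  haveI : Finite T := hTfin
  haveI hFinQ : Finite (Quot (StructEquiv (L.sum Lnew) SSum (A := B))) := by
    have hresp : ∀ h h', StructEquiv (L.sum Lnew) SSum h h' → F h = F h' :=
      fun h h' hse => (hF h h').2 ((S1 h h').1 hse)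
    refine Finite.of_injective (Quot.lift F hresp) ?_
    intro q q'
    induction q using Quot.ind with | _ h =>
    induction q' using Quot.ind with | _ h' =>
    intro hFF
    exact Quot.sound ((S1 h h').2 ((hF h h').1 hFF))
  set RA : ℕ := Nat.card (Quot (StructEquiv (L.sum Lnew) SSum (A := B))) with hRA
  -- unavoidability of the classes
  have hunav : ∀ h : ↥B ↪[L] K,
      EmbUnavoidable {h' : ↥B ↪[L] K | StructEquiv (L.sum Lnew) SSum h h'} := by
    intro h₀ η
    obtain ⟨f, hf⟩ := ZBRS.unav_main A γ hK hmono hcover hfin (fun n => (hu n).1) href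
      ea h₀ η
    exact ⟨f, (S1 h₀ (η.comp f)).2 hf⟩
  -- membership : big Ramsey degree at most RA
  have hmem : ∀ (r : ℕ) (δ : (↥B ↪[L] K) → Fin r),
      ∃ η : K ↪[L] K, (Set.range fun f : ↥B ↪[L] K => δ (η.comp f)).ncard ≤ RA := by
    intro r δ
    obtain ⟨ζ, hζ⟩ := ZBRS.upper_main A γ hK hmono hcover hfin hR hu href ea r δ
    refine ⟨ζ, ?_⟩
    set G : Quot (StructEquiv (L.sum Lnew) SSum (A := B)) → Fin r := fun qq =>
      if hq : ∃ f : ↥B ↪[L] K, Quot.mk _ (ζ.comp f) = qq then δ (ζ.comp hq.choose)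
      else δ (ζ.comp B.subtype) with hG
    have hGf : ∀ f : ↥B ↪[L] K, δ (ζ.comp f) = G (Quot.mk _ (ζ.comp f)) := by
      intro f
      have hex : ∃ f' : ↥B ↪[L] K,
          Quot.mk _ (ζ.comp f') = Quot.mk (StructEquiv (L.sum Lnew) SSum) (ζ.comp f) :=
        ⟨f, rfl⟩
      rw [hG]
      simp only [hex, dif_pos]
      have hmk := hex.choose_spec
      have hse : StructEquiv (L.sum Lnew) SSum (ζ.comp hex.choose) (ζ.comp f) :=
        hSEequiv.eqvGen_iff.1 (Quot.eq.1 hmk)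
      exact (hζ hex.choose f ((S1 _ _).1 hse kB ea)).symm
    have hsub : (Set.range fun f : ↥B ↪[L] K => δ (ζ.comp f)) ⊆ Set.range G := by
      rintro c ⟨f, rfl⟩
      exact ⟨Quot.mk _ (ζ.comp f), (hGf f).symm⟩
    calc (Set.range fun f : ↥B ↪[L] K => δ (ζ.comp f)).ncard
        ≤ (Set.range G).ncard := Set.ncard_le_ncard hsub (Set.toFinite _)
      _ = (G '' Set.univ).ncard := by rw [Set.image_univ]
      _ ≤ (Set.univ : Set (Quot (StructEquiv (L.sum Lnew) SSum (A := B)))).ncard :=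
          Set.ncard_image_le Set.finite_univ
      _ = RA := by rw [Set.ncard_univ]
  -- lower bound
  have hlb : ∀ l ∈ {l : ℕ | ∀ (r : ℕ) (δ : (↥B ↪[L] K) → Fin r),
      ∃ η : K ↪[L] K, (Set.range fun f : ↥B ↪[L] K => δ (η.comp f)).ncard ≤ l}, RA ≤ l := by
    intro l hl
    set eQ : Quot (StructEquiv (L.sum Lnew) SSum (A := B)) ≃ Fin RA :=
      Finite.equivFin _ with heQ
    obtain ⟨η, hη⟩ := hl RA (fun f => eQ (Quot.mk _ f))
    have hsurj : ∀ j : Fin RA, ∃ f : ↥B ↪[L] K, eQ (Quot.mk _ (η.comp f)) = j := by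
      intro j
      obtain ⟨h₀, hh₀⟩ := Quot.exists_rep (eQ.symm j)
      obtain ⟨f, hf⟩ := ZBRS.unav_main A γ hK hmono hcover hfin (fun n => (hu n).1) href
        ea h₀ η
      have hse : StructEquiv (L.sum Lnew) SSum h₀ (η.comp f) := (S1 _ _).2 hf
      refine ⟨f, ?_⟩
      have hmk : Quot.mk (StructEquiv (L.sum Lnew) SSum) (η.comp f) = Quot.mk _ h₀ :=
        (Quot.sound hse).symm
      rw [hmk, hh₀, Equiv.apply_symm_apply]
    have hall : (Set.range fun f : ↥B ↪[L] K => eQ (Quot.mk _ (η.comp f))) = Set.univ :=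
      Set.eq_univ_of_forall fun j => hsurj j
    rw [hall, Set.ncard_univ, Nat.card_eq_fintype_card, Fintype.card_fin] at hη
    exact hη
  exact ⟨RA, ⟨hmem, hlb⟩, hFinQ, rfl, hunav⟩
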